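/- Let P be a monotone irreducible birth-and-death transition matrix on {0,…,N} with eigenvalues 1 = β_0 > β_1 ≥ … ≥ β_N > -1. Then |β_N| ≤ β_1. -/

import Mathlib

open Matrix Finset

lemma aux_trace_pow {n : ℕ} (M : Matrix (Fin (n+1)) (Fin (n+1)) ℝ) (β : Fin (n+1) → ℝ)
    (hinj : Function.Injective β) (hspec : ∀ k, β k ∈ spectrum ℝ M) (m : ℕ) :
    (M ^ m).trace = ∑ k, β k ^ m := by
  classical
  have hev : ∀ k, ∃ v : Fin (n+1) → ℝ, v ≠ 0 ∧ M.mulVec v = β k • v := by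
    intro k
    have h1 : ¬ IsUnit (algebraMap ℝ (Matrix (Fin (n+1)) (Fin (n+1)) ℝ) (β k) - M) :=
      spectrum.mem_iff.mp (hspec k)
    have h2 : (algebraMap ℝ (Matrix (Fin (n+1)) (Fin (n+1)) ℝ) (β k) - M).det = 0 := by
      by_contra h
      exact h1 ((Matrix.isUnit_iff_isUnit_det _).mpr (isUnit_iff_ne_zero.mpr h))
    obtain ⟨v, hv0, hv⟩ := (Matrix.exists_mulVec_eq_zero_iff).mpr h2
    refine ⟨v, hv0, ?_⟩
    rw [Matrix.sub_mulVec, sub_eq_zero] at hv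
    rw [← hv, Algebra.algebraMap_eq_smul_one, Matrix.smul_mulVec, Matrix.one_mulVec]
  choose v hv0 hveq using hev
  have hli : LinearIndependent ℝ v := by
    apply Module.End.eigenvectors_linearIndependent' (Matrix.mulVecLin M) β hinj
    intro k
    rw [Module.End.hasEigenvector_iff]
    refine ⟨?_, hv0 k⟩
    rw [Module.End.mem_eigenspace_iff]
    simpa [Matrix.mulVecLin_apply] using hveq k
  have hcard : Fintype.card (Fin (n+1)) = Module.finrank ℝ (Fin (n+1) → ℝ) := by
    simp [Module.finrank_fintype_fun_eq_card]
  let b : Module.Basis (Fin (n+1)) ℝ (Fin (n+1) → ℝ) := basisOfLinearIndependentOfCardEqFinrank hli hcard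
  have hbcoe : ⇑b = v := coe_basisOfLinearIndependentOfCardEqFinrank hli hcard
  set V : Matrix (Fin (n+1)) (Fin (n+1)) ℝ := (Pi.basisFun ℝ (Fin (n+1))).toMatrix ⇑b with hVdef
  letI : Invertible V := (Pi.basisFun ℝ (Fin (n+1))).invertibleToMatrix b
  have hV : ∀ j l, V j l = v l j := by
    intro j l
    rw [hVdef, Module.Basis.toMatrix_apply, Pi.basisFun_repr, hbcoe]
  have hMV : M * V = V * Matrix.diagonal β := by
    ext i k
    rw [Matrix.mul_apply, Matrix.mul_diagonal]
    calc ∑ j, M i j * V j k = M.mulVec (v k) i := by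
          simp [Matrix.mulVec, dotProduct, hV]
      _ = β k * v k i := by rw [hveq k]; simp
      _ = V i k * β k := by rw [hV]; ring
  have hpow : ∀ m, M ^ m * V = V * (Matrix.diagonal β) ^ m := by
    intro m
    induction m with
    | zero => simp
    | succ m ih =>
        rw [pow_succ, pow_succ, Matrix.mul_assoc, hMV, ← Matrix.mul_assoc, ih, Matrix.mul_assoc]
  have hMm : M ^ m = V * (Matrix.diagonal β) ^ m * ⅟V := by
    rw [← hpow m, Matrix.mul_assoc, mul_invOf_self, Matrix.mul_one]
  rw [hMm, Matrix.trace_mul_cycle, invOf_mul_self, Matrix.one_mul,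
    Matrix.diagonal_pow, Matrix.trace_diagonal]
  simp


set_option maxHeartbeats 1000000 in
/-- let `P` be a monotone irreducible birth-and-death transition matrix on
`{0,…,N}` with (real, simple) eigenvalues `1 = β_0 > β_1 > … > β_N > -1`.
Then `|β_N| ≤ β_1`. -/
theorem stmt7 {N : ℕ} (hN : 1 ≤ N)
    (P : Matrix (Fin (N + 1)) (Fin (N + 1)) ℝ)
    (hP0 : ∀ x y, 0 ≤ P x y) (hP1 : ∀ x, ∑ y, P x y = 1)
    -- birth-and-death: tridiagonal
    (htri : ∀ x y : Fin (N + 1), 1 < ((x : ℤ) - (y : ℤ)).natAbs → P x y = 0)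
    -- irreducible: p_x > 0 and q_x > 0
    (hp : ∀ i : Fin N, 0 < P i.castSucc i.succ)
    (hq : ∀ i : Fin N, 0 < P i.succ i.castSucc)
    -- monotone: p_x + q_{x+1} ≤ 1
    (hmono : ∀ i : Fin N, P i.castSucc i.succ + P i.succ i.castSucc ≤ 1)
    -- the eigenvalues
    (β : Fin (N + 1) → ℝ)
    (hβeig : ∀ k, β k ∈ spectrum ℝ P)
    (hβall : ∀ μ ∈ spectrum ℝ P, ∃ k, β k = μ)
    (hβanti : StrictAnti β)
    (hβ0 : β 0 = 1)
    (hβlast : -1 < β (Fin.last N)) :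
    |β (Fin.last N)| ≤ β ⟨1, by omega⟩ := by
  classical
  set Dl : Matrix (Fin (N+1)) (Fin (N+1)) ℝ :=
    Matrix.of (fun x y => if (y:ℕ) ≤ (x:ℕ) then 1 else 0) with hDldef
  set E : Matrix (Fin (N+1)) (Fin (N+1)) ℝ :=
    Matrix.of (fun x y => if x = y then 1 else if (y:ℕ)+1 = (x:ℕ) then -1 else 0) with hEdef
  -- Dl * E = 1
  have hDE : Dl * E = 1 := by
    ext x y
    rw [Matrix.mul_apply, Matrix.one_apply]
    have hsplit : ∀ w : Fin (N+1), Dl x w * E w y =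
        (if w = y then Dl x w else 0) + (if (w:ℕ) = (y:ℕ)+1 then -Dl x w else 0) := by
      intro w
      simp only [hEdef, Matrix.of_apply]
      by_cases h1 : w = y
      · subst h1; rw [if_pos rfl, if_pos rfl, if_neg (by omega)]; ring
      · rw [if_neg h1, if_neg h1]
        by_cases h2 : (y:ℕ)+1 = (w:ℕ)
        · rw [if_pos h2, if_pos h2.symm]; ring
        · rw [if_neg h2, if_neg (fun hh => h2 hh.symm)]; ring
    rw [Finset.sum_congr rfl (fun w _ => hsplit w), Finset.sum_add_distrib,
      Finset.sum_ite_eq' Finset.univ y (fun w => Dl x w)]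
    have hsecond : (∑ w : Fin (N+1), if (w:ℕ) = (y:ℕ)+1 then -Dl x w else 0) =
        if h : (y:ℕ)+1 ≤ N then -Dl x ⟨(y:ℕ)+1, by omega⟩ else 0 := by
      split_ifs with h
      · rw [Finset.sum_eq_single (⟨(y:ℕ)+1, by omega⟩ : Fin (N+1))]
        · rw [if_pos rfl]
        · intro w _ hw
          rw [if_neg (fun hc => hw (Fin.ext (by simpa using hc)))]
        · simp
      · apply Finset.sum_eq_zero
        intro w _
        have := w.isLt
        rw [if_neg (by omega)]
    rw [hsecond]
    simp only [Finset.mem_univ, if_true, hDldef, Matrix.of_apply]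
    have hxy : (x = y) ↔ ((x:ℕ) = (y:ℕ)) := Fin.ext_iff
    have hxlt := x.isLt
    have hylt := y.isLt
    simp only [hxy]
    split_ifs <;> simp_all <;> omega
  set K : Matrix (Fin (N+1)) (Fin (N+1)) ℝ := E * P * Dl with hKdef
  -- K^m = E * P^m * Dl for m ≥ 1
  have hKpow : ∀ m, 1 ≤ m → K ^ m = E * P ^ m * Dl := by
    intro m hm
    induction m with
    | zero => omega
    | succ m ih =>
      rcases Nat.eq_or_lt_of_le hm with h | h
      · rw [← h, pow_one, pow_one, hKdef]
      · have hm1 : 1 ≤ m := by omega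
        rw [pow_succ, ih hm1, hKdef]
        calc E * P ^ m * Dl * (E * P * Dl)
            = (E * P ^ m) * ((Dl * E) * (P * Dl)) := by simp only [Matrix.mul_assoc]
          _ = (E * P ^ m) * (P * Dl) := by rw [hDE, Matrix.one_mul]
          _ = E * P ^ (m + 1) * Dl := by rw [pow_succ]; simp only [Matrix.mul_assoc]
  have htr : ∀ m, 1 ≤ m → (P ^ m).trace = (K ^ m).trace := by
    intro m hm
    rw [hKpow m hm, Matrix.trace_mul_cycle, hDE, Matrix.one_mul]
  -- G
  set G : Fin (N+1) → Fin (N+1) → ℝ :=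
    fun w y => ∑ z ∈ Finset.filter (fun z : Fin (N+1) => (y:ℕ) ≤ (z:ℕ)) Finset.univ, P w z with hGdef
  have hPDl : ∀ w y, (P * Dl) w y = G w y := by
    intro w y
    simp only [hGdef]
    rw [Matrix.mul_apply, Finset.sum_filter]
    refine Finset.sum_congr rfl fun z _ => ?_
    simp only [hDldef, Matrix.of_apply, mul_ite, mul_one, mul_zero]
  have hG0 : ∀ w y, 0 ≤ G w y := by
    intro w y
    simp only [hGdef]
    exact Finset.sum_nonneg fun z _ => hP0 w z
  have hG1 : ∀ w y, G w y ≤ 1 := by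
    intro w y
    simp only [hGdef]
    rw [← hP1 w]
    exact Finset.sum_le_sum_of_subset_of_nonneg (Finset.filter_subset _ _)
      (fun z _ _ => hP0 w z)
  have hGfull : ∀ w (y : Fin (N+1)), (y:ℕ) = 0 → G w y = 1 := by
    intro w y hy
    simp only [hGdef]
    rw [Finset.filter_true_of_mem (fun z _ => by omega)]
    exact hP1 w
  -- K entries
  have hKmul : ∀ x y, K x y = ∑ w, E x w * G w y := by
    intro x y
    rw [hKdef, Matrix.mul_assoc, Matrix.mul_apply]
    exact Finset.sum_congr rfl fun w _ => by rw [hPDl w y]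
  have hKsplit : ∀ x y, K x y = G x y + ∑ w : Fin (N+1), (if (w:ℕ)+1 = (x:ℕ) then -G w y else 0) := by
    intro x y
    rw [hKmul x y]
    have h1 : ∀ w : Fin (N+1), E x w * G w y =
        (if w = x then G w y else 0) + (if (w:ℕ)+1 = (x:ℕ) then -G w y else 0) := by
      intro w
      simp only [hEdef, Matrix.of_apply, Fin.ext_iff]
      split_ifs <;> first | ring1 | (exfalso; omega)
    rw [Finset.sum_congr rfl (fun w _ => h1 w), Finset.sum_add_distrib,
      Finset.sum_ite_eq' Finset.univ x (fun w => G w y), if_pos (Finset.mem_univ x)]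
  have hKtop : ∀ (x y : Fin (N+1)), (x:ℕ) = 0 → K x y = G x y := by
    intro x y hx
    rw [hKsplit x y]
    have hz : (∑ w : Fin (N+1), if (w:ℕ)+1 = (x:ℕ) then -G w y else 0) = 0 :=
      Finset.sum_eq_zero fun w _ => if_neg (by omega)
    rw [hz, add_zero]
  have hKs : ∀ (x x' : Fin (N+1)) y, (x':ℕ)+1 = (x:ℕ) → K x y = G x y - G x' y := by
    intro x x' y hxx
    rw [hKsplit x y]
    have hz : (∑ w : Fin (N+1), if (w:ℕ)+1 = (x:ℕ) then -G w y else 0) = -G x' y := by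
      rw [Finset.sum_eq_single x']
      · rw [if_pos hxx]
      · intro w _ hw
        exact if_neg (fun hc => hw (Fin.ext (by omega)))
      · simp
    rw [hz]; ring
  have hKcol : ∀ x : Fin (N+1), K x 0 = if (x:ℕ) = 0 then 1 else 0 := by
    intro x
    by_cases hx : (x:ℕ) = 0
    · rw [if_pos hx, hKtop x 0 hx, hGfull x 0 (by simp)]
    · rw [if_neg hx]
      have hxlt := x.isLt
      rw [hKs x ⟨(x:ℕ)-1, by omega⟩ 0 (by simp; omega), hGfull x 0 (by simp),
        hGfull _ 0 (by simp)]
      ring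
  have hKnn : ∀ (x y : Fin (N+1)), 0 ≤ K x y := by
    intro x y
    by_cases hx : (x:ℕ) = 0
    · rw [hKtop x y hx]; exact hG0 x y
    · have hxlt := x.isLt
      have hx1 : 1 ≤ (x:ℕ) := by omega
      set x' : Fin (N+1) := ⟨(x:ℕ)-1, by omega⟩ with hx'def
      have hxx : (x':ℕ)+1 = (x:ℕ) := by simp [hx'def]; omega
      rw [hKs x x' y hxx, sub_nonneg]
      rcases lt_trichotomy ((y:ℕ)) ((x:ℕ)) with hy | hy | hy
      · have hgx : G x y = 1 := by
          simp only [hGdef]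
          rw [← hP1 x]
          apply Finset.sum_subset (Finset.filter_subset _ _)
          intro z _ hz
          simp only [Finset.mem_filter, Finset.mem_univ, true_and, not_le] at hz
          exact htri x z (by omega)
        rw [hgx]; exact hG1 x' y
      · have hGx' : G x' y = P x' x := by
          simp only [hGdef]
          rw [Finset.sum_eq_single_of_mem x (by simp [Finset.mem_filter]; omega)]
          intro z hz hzx
          simp only [Finset.mem_filter, Finset.mem_univ, true_and] at hz
          have hzx' : (z:ℕ) ≠ (x:ℕ) := fun hc => hzx (Fin.ext hc)
          exact htri x' z (by omega)
        have hGx : G x y = 1 - P x x' := by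
          simp only [hGdef]
          have hs2 := Finset.sum_filter_add_sum_filter_not Finset.univ
            (fun z : Fin (N+1) => (y:ℕ) ≤ (z:ℕ)) (fun z => P x z)
          have hnot : (∑ z ∈ Finset.filter (fun z : Fin (N+1) => ¬((y:ℕ) ≤ (z:ℕ))) Finset.univ, P x z)
              = P x x' := by
            rw [Finset.sum_eq_single_of_mem x' (by simp [Finset.mem_filter, hx'def]; omega)]
            intro z hz hzx
            simp only [Finset.mem_filter, Finset.mem_univ, true_and, not_le] at hz
            have hzx2 : (z:ℕ) ≠ (x':ℕ) := fun hc => hzx (Fin.ext hc)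
            exact htri x z (by omega)
          rw [hP1 x, hnot] at hs2
          linarith
        have ha : ((x':ℕ)) < N := by omega
        have hic : (⟨(x':ℕ), ha⟩ : Fin N).castSucc = x' := Fin.ext (by simp)
        have his : (⟨(x':ℕ), ha⟩ : Fin N).succ = x := Fin.ext (by simp [hxx])
        have hmm := hmono ⟨(x':ℕ), ha⟩
        rw [hic, his] at hmm
        rw [hGx', hGx]
        linarith
      · have hg0 : G x' y = 0 := by
          simp only [hGdef]
          apply Finset.sum_eq_zero
          intro z hz
          simp only [Finset.mem_filter, Finset.mem_univ, true_and] at hz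
          exact htri x' z (by omega)
        rw [hg0]; exact hG0 x y
  -- powers of K
  have hKpownn : ∀ m (x y : Fin (N+1)), 0 ≤ (K ^ m) x y := by
    intro m
    induction m with
    | zero =>
      intro x y
      rw [pow_zero, Matrix.one_apply]
      split_ifs <;> norm_num
    | succ m ih =>
      intro x y
      rw [pow_succ, Matrix.mul_apply]
      exact Finset.sum_nonneg fun w _ => mul_nonneg (ih x w) (hKnn w y)
  have hKm00 : ∀ m (x : Fin (N+1)), (K ^ m) x 0 = if (x:ℕ) = 0 then 1 else 0 := by
    intro m
    induction m with
    | zero =>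
      intro x
      rw [pow_zero, Matrix.one_apply]
      have hiff : (x = 0) ↔ ((x:ℕ) = 0) := by rw [Fin.ext_iff]; simp
      simp only [hiff]
    | succ m ih =>
      intro x
      rw [pow_succ, Matrix.mul_apply]
      have hterm : ∀ w : Fin (N+1), (K ^ m) x w * K w 0
          = if w = (0:Fin (N+1)) then (K ^ m) x w else 0 := by
        intro w
        rw [hKcol w]
        by_cases hw : w = 0
        · rw [if_pos (show (w:ℕ) = 0 by simp [hw]), mul_one, if_pos hw]
        · rw [if_neg (fun hc => hw (Fin.ext (by simp [hc]))), mul_zero, if_neg hw]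
      calc (∑ w, (K ^ m) x w * K w 0)
          = ∑ w, if w = (0:Fin (N+1)) then (K ^ m) x w else 0 :=
            Finset.sum_congr rfl fun w _ => hterm w
        _ = (K ^ m) x 0 := by
            rw [Finset.sum_ite_eq' Finset.univ (0:Fin (N+1)) fun w => (K ^ m) x w]
            simp
        _ = if (x:ℕ) = 0 then 1 else 0 := ih x
  have htrK : ∀ m, (1:ℝ) ≤ (K ^ m).trace := by
    intro m
    have h00 : (K ^ m) 0 0 = 1 := by rw [hKm00 m 0]; simp
    have hle : (K ^ m) 0 0 ≤ ∑ x, (K ^ m) x x :=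
      Finset.single_le_sum (fun x _ => hKpownn m x x) (Finset.mem_univ 0)
    rw [h00] at hle
    have htreq : (K ^ m).trace = ∑ x, (K ^ m) x x := rfl
    rw [htreq]
    exact hle
  have hsum : ∀ m, 1 ≤ m → (1:ℝ) ≤ ∑ k, β k ^ m := by
    intro m hm
    rw [← aux_trace_pow P β hβanti.injective hβeig m, htr m hm]
    exact htrK m
  have hsum' : ∀ m, 1 ≤ m → (0:ℝ) ≤ ∑ k ∈ Finset.univ.erase (0:Fin (N+1)), β k ^ m := by
    intro m hm
    have h := hsum m hm
    have hsplit : β 0 ^ m + ∑ k ∈ Finset.univ.erase (0:Fin (N+1)), β k ^ m = ∑ k, β k ^ m :=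
      Finset.add_sum_erase Finset.univ (fun k => β k ^ m) (Finset.mem_univ 0)
    rw [hβ0, one_pow] at hsplit
    linarith
  -- final argument
  by_contra hcon
  push_neg at hcon
  set L := Fin.last N with hLdef
  set o : Fin (N+1) := ⟨1, by omega⟩ with hodef
  have hcon2 : β o < |β L| := hcon
  have hoL : o ≤ L := by
    rw [Fin.le_def]
    simp only [hodef, hLdef, Fin.val_last]
    omega
  have hβLo : β L ≤ β o := hβanti.antitone hoL
  have hLneg : β L < 0 := by
    by_contra h
    push_neg at h
    rw [abs_of_nonneg h] at hcon2
    linarith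
  rw [abs_of_neg hLneg] at hcon2
  set t : ℝ := -β L with htdef
  have ht0 : 0 < t := by simp only [htdef]; linarith
  have hL0 : L ≠ (0:Fin (N+1)) := by
    intro hc
    have hcv := congrArg Fin.val hc
    simp only [hLdef, Fin.val_last, Fin.val_zero] at hcv
    omega
  set T := (Finset.univ.erase (0:Fin (N+1))).erase L with hTdef
  have hbound : ∀ k ∈ T, |β k| < t := by
    intro k hk
    rw [hTdef] at hk
    have hkL : k ≠ L := (Finset.mem_erase.mp hk).1
    have hk0 : k ≠ 0 := (Finset.mem_erase.mp (Finset.mem_erase.mp hk).2).1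
    have hkv : (k:ℕ) ≠ 0 := fun hc => hk0 (Fin.ext (by simp [hc]))
    have hko : o ≤ k := by rw [Fin.le_def]; simp only [hodef]; omega
    have h1 : β k ≤ β o := hβanti.antitone hko
    have hkLlt : k < L := lt_of_le_of_ne (Fin.le_last k) hkL
    have h2 : β L < β k := hβanti hkLlt
    rw [abs_lt]
    constructor <;> simp only [htdef] at * <;> linarith
  have htend : Filter.Tendsto (fun m => ∑ k ∈ T, (|β k| / t) ^ m) Filter.atTop (nhds 0) := by
    have hterm : ∀ k ∈ T, Filter.Tendsto (fun m => (|β k| / t) ^ m) Filter.atTop (nhds 0) := by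
      intro k hk
      apply tendsto_pow_atTop_nhds_zero_of_lt_one (div_nonneg (abs_nonneg _) ht0.le)
      rw [div_lt_one ht0]
      exact hbound k hk
    have h := tendsto_finset_sum T (fun k hk => hterm k hk)
    simpa using h
  have hev := htend.eventually_lt_const (show (0:ℝ) < 1 by norm_num)
  obtain ⟨M, hM⟩ := Filter.eventually_atTop.mp hev
  have hFm := hM (2 * M + 1) (by omega)
  have hodd : Odd (2 * M + 1) := ⟨M, by ring⟩
  have hs := hsum' (2 * M + 1) (by omega)
  have hLerase : L ∈ Finset.univ.erase (0:Fin (N+1)) :=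
    Finset.mem_erase.mpr ⟨hL0, Finset.mem_univ L⟩
  have hsplit2 : β L ^ (2 * M + 1) + ∑ k ∈ T, β k ^ (2 * M + 1)
      = ∑ k ∈ Finset.univ.erase (0:Fin (N+1)), β k ^ (2 * M + 1) := by
    rw [hTdef]
    exact Finset.add_sum_erase _ (fun k => β k ^ (2 * M + 1)) hLerase
  have hβLm : β L ^ (2 * M + 1) = -(t ^ (2 * M + 1)) := by
    have hbl : β L = -t := by simp only [htdef]; ring
    rw [hbl, hodd.neg_pow]
  have hges : t ^ (2 * M + 1) ≤ ∑ k ∈ T, β k ^ (2 * M + 1) := by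
    rw [hβLm] at hsplit2
    linarith
  have habsle : ∑ k ∈ T, β k ^ (2 * M + 1) ≤ ∑ k ∈ T, |β k| ^ (2 * M + 1) :=
    Finset.sum_le_sum fun k _ =>
      calc β k ^ (2 * M + 1) ≤ |β k ^ (2 * M + 1)| := le_abs_self _
        _ = |β k| ^ (2 * M + 1) := abs_pow _ _
  have htm : 0 < t ^ (2 * M + 1) := pow_pos ht0 _
  have hone : (1:ℝ) ≤ ∑ k ∈ T, (|β k| / t) ^ (2 * M + 1) := by
    have hrw : ∑ k ∈ T, (|β k| / t) ^ (2 * M + 1)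
        = (∑ k ∈ T, |β k| ^ (2 * M + 1)) / t ^ (2 * M + 1) := by
      rw [Finset.sum_div]
      exact Finset.sum_congr rfl fun k _ => by rw [div_pow]
    rw [hrw, le_div_iff₀ htm, one_mul]
    linarith
  linarith
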